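/- Define rational functions F n j ∈ ℚ(z) (for 1 ≤ j ≤ n−1) by F n j = (−1)^(j−1) · z^j · (r (n−j))(z²) / ((r n)(z²) + 2·z² · (r (n−1))(z²)). Then for every n ≥ 3 and every j with 1 ≤ j ≤ n−2, the relation F n j = z · F n (j+1) + Σ_{k=2}^{j} (−1)^k · z^k · F n (j+2−k) + (−1)^(j−1) · z^j holds (the relation obtained by grouping paths according to the location of the first right move). -/

import Mathlib

open Polynomial

/-- The polynomials `r k ∈ ℚ[X]` defined by `r 0 = 0`, `r 1 = 1`,
`r (k+2) = (1 - 2X) r (k+1) + X r k`. -/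
noncomputable def r : ℕ → Polynomial ℚ
  | 0 => 0
  | 1 => 1
  | (k + 2) => (1 - 2 * X) * r (k + 1) + X * r k

/-- The rational functions `F n j = (-1)^(j-1) z^j r_{n-j}(z²) / (r_n(z²) + 2z² r_{n-1}(z²))`
in `ℚ(z)`; these are the path-count generating functions `f_j^{(n)}`. -/
lemma r_rec (k : ℕ) : r (k + 2) = (1 - 2 * X) * r (k + 1) + X * r k := by rw [r]

lemma r_eval_zero : ∀ n, 1 ≤ n → (r n).eval 0 = 1 := by
  intro n hn
  induction n using Nat.strong_induction_on with
  | _ n ih =>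
    match n, hn with
    | 1, _ => simp [r]
    | 2, _ => simp [r_rec, r]
    | (m+3), _ =>
      rw [show m + 3 = (m+1) + 2 from rfl, r_rec]
      simp [ih (m+2) (by omega) (by omega)]

lemma key (c : ℕ) : ∀ j, 1 ≤ j →
    r (c + 2) = -X * r (c + 1) + X * ∑ k ∈ Finset.Icc 2 j, r (c + k)
      + r (c + 2 + j) + 2 * X * r (c + 1 + j) := by
  intro j hj
  induction j, hj using Nat.le_induction with
  | base =>
    have hr : r (c + 2 + 1) = (1 - 2*X) * r (c+2) + X * r (c+1) := by
      rw [show c+2+1 = (c+1)+2 from by omega, r_rec, show c+1+1 = c+2 from by omega]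
    rw [show Finset.Icc 2 1 = ∅ from rfl, show c+1+1 = c+2 from by omega]
    simp only [Finset.sum_empty]
    linear_combination -hr
  | succ j hj ih =>
    have hr : r (c + 2 + (j+1)) = (1 - 2*X) * r (c+2+j) + X * r (c+1+j) := by
      rw [show c+2+(j+1) = (c+1+j)+2 from by omega, r_rec,
        show c+1+j+1 = c+2+j from by omega]
    rw [Finset.sum_Icc_succ_top (by omega : 2 ≤ j + 1),
      show c+(j+1) = c+1+j from by omega, show c+1+(j+1) = c+2+j from by omega]
    linear_combination ih - hr

noncomputable def F (n j : ℕ) : RatFunc ℚ :=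
  (-1) ^ (j - 1) * RatFunc.X ^ j *
      algebraMap (Polynomial ℚ) (RatFunc ℚ) ((r (n - j)).comp (X ^ 2)) /
    algebraMap (Polynomial ℚ) (RatFunc ℚ)
      ((r n).comp (X ^ 2) + 2 * X ^ 2 * (r (n - 1)).comp (X ^ 2))

lemma F_eq (n i : ℕ) :
    F n i = algebraMap (Polynomial ℚ) (RatFunc ℚ)
        ((-1) ^ (i - 1) * X ^ i * (r (n - i)).comp (X ^ 2)) /
      algebraMap (Polynomial ℚ) (RatFunc ℚ)
        ((r n).comp (X ^ 2) + 2 * X ^ 2 * (r (n - 1)).comp (X ^ 2)) := by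
  simp [F, map_mul, map_pow, RatFunc.algebraMap_X]

lemma D_ne_zero (n : ℕ) (hn : 1 ≤ n) :
    ((r n).comp (X ^ 2) + 2 * X ^ 2 * (r (n - 1)).comp (X ^ 2) : Polynomial ℚ) ≠ 0 := by
  intro h
  have := congrArg (Polynomial.eval 0) h
  simp [eval_comp, r_eval_zero n hn] at this

/-- The relation obtained by grouping paths according to the location of the
first right move: for `n ≥ 3` and `1 ≤ j ≤ n-2`,
`F n j = z F n (j+1) + ∑_{k=2}^{j} (-1)^k z^k F n (j+2-k) + (-1)^(j-1) z^j`. -/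
theorem F_first_right_move_relation (n : ℕ) (hn : 3 ≤ n) (j : ℕ)
    (hj : 1 ≤ j) (hjn : j ≤ n - 2) :
    F n j = RatFunc.X * F n (j + 1) +
      (∑ k ∈ Finset.Icc 2 j, (-1 : RatFunc ℚ) ^ k * RatFunc.X ^ k * F n (j + 2 - k)) +
      (-1) ^ (j - 1) * RatFunc.X ^ j := by
  obtain ⟨i, rfl⟩ : ∃ i, j = i + 1 := ⟨j - 1, by omega⟩
  obtain ⟨c, rfl⟩ : ∃ c, n = i + 3 + c := ⟨n - (i + 3), by omega⟩
  have hD0 : ((r (i+3+c)).comp (X ^ 2) + 2 * X ^ 2 * (r (i+3+c-1)).comp (X ^ 2) : Polynomial ℚ) ≠ 0 :=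
    D_ne_zero _ (by omega)
  set φ := algebraMap (Polynomial ℚ) (RatFunc ℚ) with hφ
  have hD : φ ((r (i+3+c)).comp (X ^ 2) + 2 * X ^ 2 * (r (i+3+c-1)).comp (X ^ 2)) ≠ 0 :=
    RatFunc.algebraMap_ne_zero hD0
  rw [show i+3+c-1 = i+2+c from by omega] at hD hD0
  set D : Polynomial ℚ := (r (i+3+c)).comp (X ^ 2) + 2 * X ^ 2 * (r (i+2+c)).comp (X ^ 2) with hDdef
  -- rewrite each F
  have hFj : F (i+3+c) (i+1) = φ ((-1)^i * X^(i+1) * (r (c+2)).comp (X^2)) / φ D := by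
    rw [F_eq, show i+3+c-(i+1) = c+2 from by omega, show i+3+c-1 = i+2+c from by omega,
      Nat.add_sub_cancel]
  have hFj1 : F (i+3+c) (i+1+1) = φ ((-1)^(i+1) * X^(i+2) * (r (c+1)).comp (X^2)) / φ D := by
    rw [F_eq, show i+3+c-(i+1+1) = c+1 from by omega, show i+3+c-1 = i+2+c from by omega,
      Nat.add_sub_cancel, show i+1+1 = i+2 from rfl]
  have hterm : ∀ k ∈ Finset.Icc 2 (i+1),
      (-1 : RatFunc ℚ)^k * RatFunc.X^k * F (i+3+c) (i+1+2-k)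
        = φ ((-1)^i * X^(i+3) * (r (c+k)).comp (X^2)) / φ D := by
    intro k hk
    simp only [Finset.mem_Icc] at hk
    rw [F_eq, show i+3+c-(i+1+2-k) = c+k from by omega, show i+1+2-k-1 = i+2-k from by omega,
      show i+3+c-1 = i+2+c from by omega, ← hDdef]
    rw [← mul_div_assoc]
    congr 1
    rw [show (-1 : RatFunc ℚ) = φ (-1) from by simp, ← RatFunc.algebraMap_X, hφ,
      ← map_pow, ← map_pow, ← map_mul, ← map_mul]
    congr 1
    calc ((-1 : Polynomial ℚ))^k * X^k * ((-1)^(i+2-k) * X^(i+1+2-k) * (r (c+k)).comp (X^2))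
        = ((-1)^k * (-1)^(i+2-k)) * (X^k * X^(i+1+2-k)) * (r (c+k)).comp (X^2) := by ring
      _ = (-1)^(i+2) * X^(i+3) * (r (c+k)).comp (X^2) := by
          rw [← pow_add, ← pow_add, show k + (i+2-k) = i+2 from by omega,
            show k + (i+1+2-k) = i+3 from by omega]
      _ = (-1)^i * X^(i+3) * (r (c+k)).comp (X^2) := by
          rw [show ((-1 : Polynomial ℚ))^(i+2) = (-1)^i from by rw [pow_add]; norm_num]
  rw [hFj, hFj1, Finset.sum_congr rfl hterm]
  rw [← Finset.sum_div, ← map_sum, ← Finset.mul_sum, ← mul_div_assoc, ← RatFunc.algebraMap_X, hφ]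
  rw [show ((-1 : RatFunc ℚ))^(i+1-1) * (φ X)^(i+1)
      = φ ((-1)^i * X^(i+1) * D) / φ D from by
    rw [map_mul, mul_div_assoc, div_self hD, mul_one, Nat.add_sub_cancel,
      map_mul, map_pow, map_pow]; simp]
  rw [← map_mul, ← add_div, ← add_div]
  congr 1
  rw [← map_add, ← map_add]
  refine congrArg φ ?_
  -- now a polynomial identity
  have keyc := congrArg (fun p => p.comp (X^2 : Polynomial ℚ)) (key c (i+1) (by omega))
  simp only [add_comp, mul_comp, neg_comp, X_comp, sum_comp, one_comp, sub_comp,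
    ofNat_comp] at keyc
  rw [show c+2+(i+1) = i+3+c from by omega, show c+1+(i+1) = i+2+c from by omega] at keyc
  rw [hDdef, show ((-1 : Polynomial ℚ))^(i+1) = (-1)^i * (-1) from pow_succ _ _]
  linear_combination ((-1 : Polynomial ℚ)^i * X^(i+1)) * keyc
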